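/- Let G be a graph and let f(G) be the Second-Price Matching instance constructed from G as follows: for each edge e of G there is an edge keyword bid on by its two endpoint vertex-bidders and a private bidder x_e; for each vertex v there is a gadget with keywords h_v, l_v (arriving before all edge keywords, with h_v before l_v) and bidders y_v, z_v, where v and y_v bid on h_v, and y_v and z_v bid on l_v. Then the maximum second-price matching of f(G) has value exactly 2|V(G)| + |E(G)| − τ(G), where τ(G) is the minimum vertex cover number of G. -/

import Mathlib

/-- A second-price matching for keywords `K` with arrival (strict) order `lt`,
bidders `B`, and adjacency `A`. -/
def IsSPM {K B : Type*} (lt : K → K → Prop) (A : K → B → Prop)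
    (S : Finset K) (g w : K → B) : Prop :=
  (∀ u ∈ S, A u (g u) ∧ A u (w u) ∧ g u ≠ w u) ∧
  (∀ u ∈ S, ∀ u' ∈ S, u ≠ u' → g u ≠ g u') ∧
  (∀ u ∈ S, ∀ u' ∈ S, lt u' u → g u' ≠ g u ∧ g u' ≠ w u)

variable {n : ℕ}

/-- Keywords of the instance `f(G)`: `Sum.inl v` is the gadget keyword `h_v`,
`Sum.inr (Sum.inl v)` is the gadget keyword `l_v`, and `Sum.inr (Sum.inr e)` is the
edge keyword for `e ∈ E(G)`. -/
abbrev GadgetKeyword (G : SimpleGraph (Fin n)) [DecidableRel G.Adj] :=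
  Fin n ⊕ (Fin n ⊕ {e // e ∈ G.edgeFinset})

/-- Bidders of the instance `f(G)`: `Sum.inl v` is the vertex bidder `v`,
`Sum.inr (Sum.inl e)` is the private bidder `x_e`, and `Sum.inr (Sum.inr (Sum.inl v))`,
`Sum.inr (Sum.inr (Sum.inr v))` are the gadget bidders `y_v`, `z_v`. -/
abbrev GadgetBidder (G : SimpleGraph (Fin n)) [DecidableRel G.Adj] :=
  Fin n ⊕ ({e // e ∈ G.edgeFinset} ⊕ (Fin n ⊕ Fin n))

/-- Who bids on which keyword in `f(G)`: `v` and `y_v` bid on `h_v`; `y_v` and `z_v`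
bid on `l_v`; the two endpoints of `e` and `x_e` bid on the edge keyword `e`. -/
def gadgetAdj (G : SimpleGraph (Fin n)) [DecidableRel G.Adj] :
    GadgetKeyword G → GadgetBidder G → Prop
  | Sum.inl v => fun b =>
      b = Sum.inl v ∨ b = Sum.inr (Sum.inr (Sum.inl v))
  | Sum.inr (Sum.inl v) => fun b =>
      b = Sum.inr (Sum.inr (Sum.inl v)) ∨ b = Sum.inr (Sum.inr (Sum.inr v))
  | Sum.inr (Sum.inr e) => fun b =>
      (∃ v : Fin n, b = Sum.inl v ∧ v ∈ (e : Sym2 (Fin n))) ∨ b = Sum.inr (Sum.inl e)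

set_option maxHeartbeats 1600000 in
/-- for any arrival order on the keywords of `f(G)` in which every `h_v`
precedes `l_v` and every gadget keyword precedes every edge keyword, the maximum
second-price matching of `f(G)` has value exactly `2|V(G)| + |E(G)| - τ(G)`. -/
theorem stmt2 (G : SimpleGraph (Fin n)) [DecidableRel G.Adj]
    (lt : GadgetKeyword G → GadgetKeyword G → Prop) [IsStrictTotalOrder _ lt]
    (horder1 : ∀ v : Fin n, lt (Sum.inl v) (Sum.inr (Sum.inl v)))
    (horder2 : ∀ (u : Fin n ⊕ Fin n) (e : {e // e ∈ G.edgeFinset}),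
      lt (Sum.elim Sum.inl (fun v => Sum.inr (Sum.inl v)) u) (Sum.inr (Sum.inr e)))
    (τ : ℕ)
    (hτ : IsLeast {k : ℕ | ∃ C : Finset (Fin n), C.card = k ∧
      ∀ e ∈ G.edgeFinset, ∃ v ∈ C, v ∈ e} τ) :
    IsGreatest {val : ℕ | ∃ (S : Finset (GadgetKeyword G))
        (g w : GadgetKeyword G → GadgetBidder G),
        IsSPM lt (gadgetAdj G) S g w ∧ S.card = val}
      (2 * n + G.edgeFinset.card - τ) := by
  classical
  obtain ⟨⟨C, hCcard, hCcov⟩, hmin⟩ := hτ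
  have hτn : τ ≤ n := by
    have := Finset.card_le_univ C
    simpa [hCcard] using this
  set E' := {e // e ∈ G.edgeFinset}
  have hE'card : Fintype.card E' = G.edgeFinset.card := Fintype.card_coe _
  -- embeddings of the three kinds of keywords
  let emb1 : Fin n ↪ GadgetKeyword G := ⟨Sum.inl, Sum.inl_injective⟩
  let emb2 : Fin n ↪ GadgetKeyword G :=
    ⟨fun v => Sum.inr (Sum.inl v), fun a b h => by simpa using h⟩
  let emb3 : E' ↪ GadgetKeyword G :=
    ⟨fun e => Sum.inr (Sum.inr e), fun a b h => by simpa using h⟩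
  constructor
  · -- membership : construct an SPM of the right size
    have pick : ∀ e : E', {v : Fin n // v ∈ C ∧ v ∈ (e : Sym2 (Fin n))} := by
      intro e
      have h := hCcov e.1 e.2
      exact ⟨h.choose, h.choose_spec⟩
    have hginj : Function.Injective (Sum.elim (fun v : Fin n => (Sum.inl v : GadgetBidder G))
        (Sum.elim (fun v => Sum.inr (Sum.inr (Sum.inr v))) (fun e => Sum.inr (Sum.inl e)))) := by
      rintro (v | v | e) (v' | v' | e') h <;> simp_all
    refine ⟨(Cᶜ.map emb1 ∪ Finset.univ.map emb2) ∪ Finset.univ.map emb3,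
      Sum.elim (fun v => Sum.inl v)
        (Sum.elim (fun v => Sum.inr (Sum.inr (Sum.inr v))) (fun e => Sum.inr (Sum.inl e))),
      Sum.elim (fun v => Sum.inr (Sum.inr (Sum.inl v)))
        (Sum.elim (fun v => Sum.inr (Sum.inr (Sum.inl v))) (fun e => Sum.inl (pick e).1)),
      ⟨?_, ?_, ?_⟩, ?_⟩
    · rintro (v | v | e) hu
      · exact ⟨Or.inl rfl, Or.inr rfl, by simp⟩
      · exact ⟨Or.inr rfl, Or.inl rfl, by simp⟩
      · exact ⟨Or.inr rfl, Or.inl ⟨(pick e).1, rfl, (pick e).2.2⟩, by simp⟩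
    · rintro u - u' - hne h
      exact hne (hginj h)
    · rintro u hu u' hu' hlt
      refine ⟨fun h => ?_, ?_⟩
      · rw [hginj h] at hlt
        exact absurd hlt (irrefl _)
      · clear hu hlt
        rcases u' with v' | v' | e' <;> rcases u with v | v | e <;>
          simp only [Sum.elim_inl, Sum.elim_inr] <;> try simp
        -- remaining : g (inl v') = inl v' vs w (edge e) = inl (pick e)
        intro h
        have hv' : v' ∈ Cᶜ := by
          rcases Finset.mem_union.1 hu' with h2 | h2
          · rcases Finset.mem_union.1 h2 with h3 | h3
            · obtain ⟨a, ha, hae⟩ := Finset.mem_map.1 h3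
              simp only [emb1, Function.Embedding.coeFn_mk] at hae
              obtain rfl : a = v' := Sum.inl_injective hae
              exact ha
            · obtain ⟨a, -, hae⟩ := Finset.mem_map.1 h3
              simp [emb2] at hae
          · obtain ⟨a, -, hae⟩ := Finset.mem_map.1 h2
            simp [emb3] at hae
        rw [Finset.mem_compl] at hv'
        exact hv' (h ▸ (pick e).2.1)
    · have hd1 : Disjoint (Cᶜ.map emb1) (Finset.univ.map emb2 : Finset (GadgetKeyword G)) := by
        simp [Finset.disjoint_left, emb1, emb2]
      have hd2 : Disjoint (Cᶜ.map emb1 ∪ Finset.univ.map emb2)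
          (Finset.univ.map emb3 : Finset (GadgetKeyword G)) := by
        have e1 : ∀ y, emb1 y = Sum.inl y := fun _ => rfl
        have e2 : ∀ y, emb2 y = Sum.inr (Sum.inl y) := fun _ => rfl
        have e3 : ∀ y, emb3 y = Sum.inr (Sum.inr y) := fun _ => rfl
        simp [Finset.disjoint_left, e1, e2, e3]
      rw [Finset.card_union_of_disjoint hd2, Finset.card_union_of_disjoint hd1]
      simp [Finset.card_map, Finset.card_compl, hCcard, hE'card]
      omega
  · -- upper bound
    rintro val ⟨S, g, w, hspm, rfl⟩
    obtain ⟨hadj, hinj, hord⟩ := hspm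
    set Vh : Finset (Fin n) := Finset.univ.filter (fun v => Sum.inl v ∈ S) with hVh
    set Vl : Finset (Fin n) := Finset.univ.filter (fun v => Sum.inr (Sum.inl v) ∈ S) with hVl
    set Ve : Finset E' := Finset.univ.filter (fun e => Sum.inr (Sum.inr e) ∈ S) with hVe
    set U : Finset E' := Finset.univ.filter (fun e => ¬ Sum.inr (Sum.inr e) ∈ S) with hU
    set D : Finset (Fin n) := Vh ∩ Vl with hD
    -- key lemma A
    have lemA : ∀ v ∈ D, g (Sum.inl v) = Sum.inl v := by
      intro v hv
      rw [hD, Finset.mem_inter, hVh, hVl, Finset.mem_filter, Finset.mem_filter] at hv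
      obtain ⟨⟨-, hh⟩, -, hl⟩ := hv
      obtain ⟨hga, hwa, hgw⟩ := hadj _ hl
      obtain ⟨hne1, hne2⟩ := hord _ hl _ hh (horder1 v)
      obtain ⟨hga', -, -⟩ := hadj _ hh
      simp only [gadgetAdj] at hga hwa hga'
      rcases hga' with h | h
      · exact h
      · exfalso; rcases hga with h1 | h1 <;> rcases hwa with h2 | h2 <;> simp_all
    -- key lemma B
    have lemB : ∀ e : E', Sum.inr (Sum.inr e) ∈ S →
        ∃ c : Fin n, c ∈ (e : Sym2 (Fin n)) ∧ c ∉ D := by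
      intro e he
      obtain ⟨hga, hwa, hgw⟩ := hadj _ he
      simp only [gadgetAdj] at hga hwa
      have key : ∀ c : Fin n, c ∈ D → g (Sum.inr (Sum.inr e)) ≠ Sum.inl c ∧
          w (Sum.inr (Sum.inr e)) ≠ Sum.inl c := by
        intro c hc
        have hcS : Sum.inl c ∈ S := by
          rw [hD, Finset.mem_inter, hVh, Finset.mem_filter] at hc
          exact hc.1.2
        have hlt := horder2 (Sum.inl c) e
        simp only [Sum.elim_inl] at hlt
        obtain ⟨h1, h2⟩ := hord _ he _ hcS hlt
        rw [lemA c hc] at h1 h2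
        exact ⟨fun h => h1 h.symm, fun h => h2 h.symm⟩
      rcases hga with ⟨c, hgc, hce⟩ | hg
      · refine ⟨c, hce, fun hc => (key c hc).1 hgc⟩
      · rcases hwa with ⟨c, hwc, hce⟩ | hw
        · refine ⟨c, hce, fun hc => (key c hc).2 hwc⟩
        · exact absurd (hg.trans hw.symm) hgw
    -- decomposition of S
    have hSdecomp : S = (Vh.map emb1 ∪ Vl.map emb2) ∪ Ve.map emb3 := by
      ext k
      have e1 : ∀ y, emb1 y = Sum.inl y := fun _ => rfl
      have e2 : ∀ y, emb2 y = Sum.inr (Sum.inl y) := fun _ => rfl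
      have e3 : ∀ y, emb3 y = Sum.inr (Sum.inr y) := fun _ => rfl
      rcases k with v | v | e <;>
        simp [hVh, hVl, hVe, e1, e2, e3]
    have hd1 : Disjoint (Vh.map emb1) (Vl.map emb2) := by
      simp [Finset.disjoint_left, emb1, emb2]
    have hd2 : Disjoint (Vh.map emb1 ∪ Vl.map emb2) (Ve.map emb3) := by
      have e1 : ∀ y, emb1 y = Sum.inl y := fun _ => rfl
      have e2 : ∀ y, emb2 y = Sum.inr (Sum.inl y) := fun _ => rfl
      have e3 : ∀ y, emb3 y = Sum.inr (Sum.inr y) := fun _ => rfl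
      simp [Finset.disjoint_left, e1, e2, e3]
    have hScard : S.card = Vh.card + Vl.card + Ve.card := by
      rw [hSdecomp, Finset.card_union_of_disjoint hd2, Finset.card_union_of_disjoint hd1]
      simp
    -- counting facts
    have h1 : D.card + (Vh ∪ Vl).card = Vh.card + Vl.card :=
      Finset.card_inter_add_card_union Vh Vl
    have h2 : (Vh ∪ Vl).card ≤ n := by
      have := Finset.card_le_univ (Vh ∪ Vl)
      simpa using this
    have h3 : Ve.card + U.card = G.edgeFinset.card := by
      rw [hVe, hU, Finset.card_filter_add_card_filter_not]
      simpa using hE'card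
    -- the vertex cover
    have hcov : τ ≤ (n - D.card) + U.card := by
      have hc : ∀ ee ∈ G.edgeFinset,
          ∃ v ∈ Dᶜ ∪ U.image (fun e : E' => (Quot.out (e : Sym2 (Fin n))).1), v ∈ ee := by
        intro ee hee
        by_cases hS : Sum.inr (Sum.inr (⟨ee, hee⟩ : E')) ∈ S
        · obtain ⟨c, hce, hcD⟩ := lemB ⟨ee, hee⟩ hS
          exact ⟨c, Finset.mem_union_left _ (Finset.mem_compl.2 hcD), hce⟩
        · refine ⟨(Quot.out ee).1, Finset.mem_union_right _ ?_, Sym2.out_fst_mem ee⟩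
          exact Finset.mem_image.2 ⟨⟨ee, hee⟩, Finset.mem_filter.2 ⟨Finset.mem_univ _, hS⟩, rfl⟩
      have hle := hmin ⟨_, rfl, hc⟩
      calc τ ≤ (Dᶜ ∪ U.image _).card := hle
        _ ≤ Dᶜ.card + (U.image _).card := Finset.card_union_le _ _
        _ ≤ (n - D.card) + U.card := by
            gcongr
            · simp [Finset.card_compl]
            · exact Finset.card_image_le
    have hDn : D.card ≤ n := by
      have := Finset.card_le_univ D; simpa using this
    omega
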